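/- Let T > k ≥ 1 be integers, set m := T−k and p := m(m+1)/2. Let G be a T×m real matrix, let O be an m×m orthogonal matrix, and set G̃ := G O. Let X (respectively X̃) be the p×T matrix whose t-th column is vech(G' E_{t,t} G) (respectively vech(G̃' E_{t,t} G̃)), and let 𝓡(O) := (1/2) A_m' (O' ⊗ O') A_m, where A_m is the m²×p matrix with columns √2 (e_1 ⊗ e_1), ..., √2 (e_m ⊗ e_m), followed by e_i ⊗ e_j + e_j ⊗ e_i for i < j ranked lexicographically. Then: (i) X̃ = 𝓡(O) X; (ii) if X'X is invertible, then X̃'X̃ is invertible and I_p − X̃ (X̃'X̃)^{-1} X̃' = 𝓡(O) ( I_p − X (X'X)^{-1} X' ) 𝓡(O)^{-1}. -/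

import Mathlib

open Matrix

noncomputable section

/-- Half-vectorization of a symmetric matrix, with diagonal entries scaled by `1/√2`,
indexed by pairs `(i, j)` with `i ≤ j`. -/
def vech {m : ℕ} (Z : Matrix (Fin m) (Fin m) ℝ) :
    {q : Fin m × Fin m // q.1 ≤ q.2} → ℝ :=
  fun q => if q.val.1 = q.val.2 then Z q.val.1 q.val.2 / Real.sqrt 2 else Z q.val.1 q.val.2

/-- The m² × (m(m+1)/2) duplication-type matrix `A_m`, whose column at a diagonal pair
`(i, i)` is `√2 (e_i ⊗ e_i)` and whose column at a pair `(i, j)` with `i < j` is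
`e_i ⊗ e_j + e_j ⊗ e_i`. -/
def Amat (m : ℕ) : Matrix (Fin m × Fin m) {q : Fin m × Fin m // q.1 ≤ q.2} ℝ :=
  fun r q =>
    if q.val.1 = q.val.2 then (if r = q.val then Real.sqrt 2 else 0)
    else (if r = q.val then 1 else 0) + (if r = (q.val.2, q.val.1) then 1 else 0)

/-- `𝓡(O) = (1/2) A_m' (O' ⊗ O') A_m`. -/
def Rmat (m : ℕ) (O : Matrix (Fin m) (Fin m) ℝ) :
    Matrix {q : Fin m × Fin m // q.1 ≤ q.2} {q : Fin m × Fin m // q.1 ≤ q.2} ℝ :=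
  (1 / 2 : ℝ) • ((Amat m)ᵀ * Matrix.kroneckerMap (· * ·) Oᵀ Oᵀ * Amat m)

variable {m : ℕ}

lemma amat_entry_zero {a b : Fin m} (q : {q : Fin m × Fin m // q.1 ≤ q.2})
    (h1 : (a, b) ≠ q.val) (h2 : (a, b) ≠ (q.val.2, q.val.1)) :
    Amat m (a, b) q = 0 := by
  simp [Amat, h1, h2]

lemma amat_mulVec {Z : Matrix (Fin m) (Fin m) ℝ} (hZ : ∀ a b, Z a b = Z b a) :
    Amat m *ᵥ vech Z = fun r => Z r.1 r.2 := by
  funext r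
  obtain ⟨a, b⟩ := r
  simp only [mulVec, dotProduct]
  rcases le_or_gt a b with hab | hab
  · rw [Finset.sum_eq_single (⟨(a,b), hab⟩ : {q : Fin m × Fin m // q.1 ≤ q.2})]
    · by_cases h : a = b
      · subst h
        simp only [Amat, vech]
        have h2 : Real.sqrt 2 ≠ 0 := by positivity
        simp only [if_true]
        field_simp
      · have h' : ¬ ((a, b) = (b, a)) := by
          rw [Prod.mk.injEq]
          rintro ⟨h1, h2⟩; exact h h1
        simp [Amat, vech, h, h']
    · intro q _ hq
      have h1 : (a, b) ≠ q.val := fun hc => hq (Subtype.ext hc.symm)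
      by_cases h2 : (a, b) = (q.val.2, q.val.1)
      · exfalso
        rw [Prod.mk.injEq] at h2
        obtain ⟨e1, e2⟩ := h2
        have hba : b ≤ a := by rw [e1, e2]; exact q.property
        have hab2 : a = b := le_antisymm hab hba
        apply h1
        rw [Prod.ext_iff]
        exact ⟨by rw [← e2, hab2], by rw [← e1, ← hab2]⟩
      · rw [amat_entry_zero q h1 h2, zero_mul]
    · simp
  · have hba : b ≤ a := le_of_lt hab
    rw [Finset.sum_eq_single (⟨(b,a), hba⟩ : {q : Fin m × Fin m // q.1 ≤ q.2})]
    · have h : ¬ (b = a) := ne_of_lt hab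
      have h1 : ¬ ((a, b) = (b, a)) := by
        rw [Prod.mk.injEq]
        rintro ⟨hc1, hc2⟩; exact h hc1.symm
      simp [Amat, vech, h, h1, hZ a b]
    · intro q _ hq
      have h2 : (a, b) ≠ (q.val.2, q.val.1) := by
        intro hc
        rw [Prod.mk.injEq] at hc
        obtain ⟨e1, e2⟩ := hc
        exact hq (Subtype.ext (Prod.ext e2.symm e1.symm))
      have h1 : (a, b) ≠ q.val := by
        intro hc
        rw [Prod.ext_iff] at hc
        obtain ⟨e1, e2⟩ := hc
        have hle := q.property
        rw [← e1, ← e2] at hle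
        exact absurd hle (not_le.mpr hab)
      rw [amat_entry_zero q h1 h2, zero_mul]
    · simp

lemma amatT_mulVec {Z : Matrix (Fin m) (Fin m) ℝ} (hZ : ∀ a b, Z a b = Z b a) :
    (Amat m)ᵀ *ᵥ (fun r => Z r.1 r.2) = fun q => 2 * vech Z q := by
  funext q
  obtain ⟨⟨i, j⟩, hij⟩ := q
  simp only [mulVec, dotProduct, transpose_apply]
  by_cases h : i = j
  · subst h
    simp only [Amat, vech, if_pos rfl]
    rw [Finset.sum_eq_single ((i, i) : Fin m × Fin m)]
    · have h2 : Real.sqrt 2 ≠ 0 := by positivity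
      have hs : Real.sqrt 2 * Real.sqrt 2 = 2 := Real.mul_self_sqrt (by norm_num)
      simp only [if_pos rfl, if_true]
      field_simp
      linear_combination (Z i i) * hs
    · intro r _ hr; simp [hr]
    · simp
  · simp only [Amat, vech, if_neg h]
    have key : ∀ r : Fin m × Fin m,
        ((if r = ((i, j) : Fin m × Fin m) then (1:ℝ) else 0) + (if r = (j, i) then 1 else 0)) * Z r.1 r.2
        = (if r = ((i,j) : Fin m × Fin m) then Z r.1 r.2 else 0) + (if r = ((j,i) : Fin m × Fin m) then Z r.1 r.2 else 0) := by
      intro r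
      by_cases h1 : r = (i,j)
      · subst h1
        have h2 : ¬ (((i,j) : Fin m × Fin m) = (j,i)) := by
          rw [Prod.mk.injEq]; rintro ⟨hc, -⟩; exact h hc
        simp [h2]
      · by_cases h2 : r = (j,i)
        · subst h2; simp [h1]
        · simp [h1, h2]
    simp only [key]
    rw [Finset.sum_add_distrib, Finset.sum_ite_eq' Finset.univ, Finset.sum_ite_eq' Finset.univ]
    simp [hZ j i]
    ring

lemma kron_mulVec (M : Matrix (Fin m) (Fin m) ℝ) (Z : Matrix (Fin m) (Fin m) ℝ) :
    (Matrix.kroneckerMap (· * ·) Mᵀ Mᵀ) *ᵥ (fun r => Z r.1 r.2)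
      = fun r => (Mᵀ * Z * M) r.1 r.2 := by
  funext r
  obtain ⟨a, b⟩ := r
  simp only [mulVec, dotProduct, kroneckerMap_apply, transpose_apply, Matrix.mul_apply]
  rw [Fintype.sum_prod_type, Finset.sum_comm]
  simp only [Finset.sum_mul]
  apply Finset.sum_congr rfl
  intro d _
  apply Finset.sum_congr rfl
  intro c _
  ring

lemma symm_entries {X : Matrix (Fin m) (Fin m) ℝ} (h : Xᵀ = X) :
    ∀ a b, X a b = X b a := fun a b => congrFun (congrFun h b) a

lemma conj_symm {Z : Matrix (Fin m) (Fin m) ℝ} (hZ : ∀ a b, Z a b = Z b a)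
    (M : Matrix (Fin m) (Fin m) ℝ) :
    ∀ a b, (Mᵀ * Z * M) a b = (Mᵀ * Z * M) b a := by
  apply symm_entries
  have ht : Zᵀ = Z := by ext a b; exact hZ b a
  rw [transpose_mul, transpose_mul, transpose_transpose, ht, Matrix.mul_assoc]

lemma rmat_mulVec (M : Matrix (Fin m) (Fin m) ℝ) {Z : Matrix (Fin m) (Fin m) ℝ}
    (hZ : ∀ a b, Z a b = Z b a) :
    Rmat m M *ᵥ vech Z = vech (Mᵀ * Z * M) := by
  have hZ' := conj_symm hZ M
  have h1 : ((Amat m)ᵀ * (Matrix.kroneckerMap (· * ·) Mᵀ Mᵀ * Amat m)) *ᵥ vech Z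
      = fun q => 2 * vech (Mᵀ * Z * M) q := by
    rw [← mulVec_mulVec, ← mulVec_mulVec, amat_mulVec hZ, kron_mulVec, amatT_mulVec hZ']
  rw [Rmat, Matrix.mul_assoc, smul_mulVec, h1]
  funext q
  simp only [Pi.smul_apply, smul_eq_mul]
  ring

lemma vech_surj (v : {q : Fin m × Fin m // q.1 ≤ q.2} → ℝ) :
    ∃ Z : Matrix (Fin m) (Fin m) ℝ, (∀ a b, Z a b = Z b a) ∧ vech Z = v := by
  refine ⟨fun a b => if h : a ≤ b then
      (if a = b then Real.sqrt 2 * v ⟨(a, b), h⟩ else v ⟨(a, b), h⟩)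
    else v ⟨(b, a), le_of_lt (not_le.mp h)⟩, ?_, ?_⟩
  · intro a b
    dsimp only
    rcases lt_trichotomy a b with h | h | h
    · rw [dif_pos h.le, dif_neg (not_le.mpr h), if_neg h.ne]
    · subst h; rfl
    · rw [dif_neg (not_le.mpr h), dif_pos h.le, if_neg h.ne]
  · funext q
    obtain ⟨⟨a, b⟩, hab⟩ := q
    by_cases h : a = b
    · subst h
      have h2 : Real.sqrt 2 ≠ 0 := by positivity
      simp only [vech, if_true, dif_pos (le_refl a)]
      rw [mul_comm, mul_div_assoc, div_self h2, mul_one]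
    · simp only [vech]
      rw [if_neg h, dif_pos hab, if_neg h]
lemma ext_of_vech {M N : Matrix {q : Fin m × Fin m // q.1 ≤ q.2} {q : Fin m × Fin m // q.1 ≤ q.2} ℝ}
    (h : ∀ Z : Matrix (Fin m) (Fin m) ℝ, (∀ a b, Z a b = Z b a) → M *ᵥ vech Z = N *ᵥ vech Z) :
    M = N := by
  ext q q'
  obtain ⟨Z, hZ, hv⟩ := vech_surj (Pi.single q' (1 : ℝ))
  have := congrFun (h Z hZ) q
  rw [hv] at this
  simpa [Matrix.mulVec_single] using this

lemma rmat_mul_rmat (M N : Matrix (Fin m) (Fin m) ℝ) :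
    Rmat m M * Rmat m N = Rmat m (N * M) := by
  apply ext_of_vech
  intro Z hZ
  have hZ' := conj_symm hZ N
  rw [← mulVec_mulVec, rmat_mulVec N hZ, rmat_mulVec M hZ', rmat_mulVec (N * M) hZ]
  rw [transpose_mul]
  noncomm_ring

lemma rmat_one : Rmat m (1 : Matrix (Fin m) (Fin m) ℝ) = 1 := by
  apply ext_of_vech
  intro Z hZ
  rw [rmat_mulVec _ hZ]
  simp

lemma rmat_transpose (M : Matrix (Fin m) (Fin m) ℝ) :
    (Rmat m M)ᵀ = Rmat m Mᵀ := by
  rw [Rmat, Rmat, transpose_smul]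
  rw [transpose_mul, transpose_mul, transpose_transpose]
  have : (Matrix.kroneckerMap (· * ·) Mᵀ Mᵀ)ᵀ = Matrix.kroneckerMap (· * ·) Mᵀᵀ Mᵀᵀ := by
    ext ⟨a, b⟩ ⟨c, d⟩
    simp [kroneckerMap_apply, mul_comm]
  rw [this, Matrix.mul_assoc]

theorem statement19 (T k : ℕ) (hk : 1 ≤ k) (hkT : k < T)
    (G : Matrix (Fin T) (Fin (T - k)) ℝ)
    (O : Matrix (Fin (T - k)) (Fin (T - k)) ℝ) (hO : Oᵀ * O = 1)
    (X Xt : Matrix {q : Fin (T - k) × Fin (T - k) // q.1 ≤ q.2} (Fin T) ℝ)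
    (hX : ∀ (t : Fin T) (q : {q : Fin (T - k) × Fin (T - k) // q.1 ≤ q.2}),
      X q t = vech (Gᵀ * Matrix.single t t (1 : ℝ) * G) q)
    (hXt : ∀ (t : Fin T) (q : {q : Fin (T - k) × Fin (T - k) // q.1 ≤ q.2}),
      Xt q t = vech ((G * O)ᵀ * Matrix.single t t (1 : ℝ) * (G * O)) q) :
    Xt = Rmat (T - k) O * X ∧
      (IsUnit (Xᵀ * X) →
        IsUnit (Xtᵀ * Xt) ∧
          1 - Xt * (Xtᵀ * Xt)⁻¹ * Xtᵀ =
            Rmat (T - k) O * (1 - X * (Xᵀ * X)⁻¹ * Xᵀ) * (Rmat (T - k) O)⁻¹) := by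
  have hsym : ∀ t : Fin T, ∀ a b,
      (Gᵀ * Matrix.single t t (1 : ℝ) * G) a b
        = (Gᵀ * Matrix.single t t (1 : ℝ) * G) b a := by
    intro t
    apply symm_entries
    rw [transpose_mul, transpose_mul, transpose_transpose, Matrix.mul_assoc]
    congr 2
    ext i j
    simp only [transpose_apply, Matrix.single, of_apply]
    by_cases ht1 : t = i <;> by_cases ht2 : t = j <;> simp [ht1, ht2]
  have hi : Xt = Rmat (T - k) O * X := by
    ext q t
    have hcol : (fun q' => X q' t) = vech (Gᵀ * Matrix.single t t (1 : ℝ) * G) := by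
      funext q'; exact hX t q'
    have hmul : (Rmat (T - k) O * X) q t
        = (Rmat (T - k) O *ᵥ fun q' => X q' t) q := by
      rfl
    have hmm : Oᵀ * (Gᵀ * Matrix.single t t (1:ℝ) * G) * O
        = (G * O)ᵀ * Matrix.single t t (1:ℝ) * (G * O) := by
      rw [transpose_mul]
      simp only [Matrix.mul_assoc]
    rw [hmul, hcol, rmat_mulVec O (hsym t), hXt, hmm]
  refine ⟨hi, fun hU => ?_⟩
  have hO' : O * Oᵀ = 1 := mul_eq_one_comm.mp hO
  have h1 : Rmat (T - k) Oᵀ * Rmat (T - k) O = 1 := by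
    rw [rmat_mul_rmat, hO', rmat_one]
  have h2 : Rmat (T - k) O * Rmat (T - k) Oᵀ = 1 := by
    rw [rmat_mul_rmat, hO, rmat_one]
  have hT : (Rmat (T - k) O)ᵀ = Rmat (T - k) Oᵀ := rmat_transpose O
  have hinv : (Rmat (T - k) O)⁻¹ = Rmat (T - k) Oᵀ := Matrix.inv_eq_right_inv h2
  have hXtX : Xtᵀ * Xt = Xᵀ * X := by
    rw [hi, transpose_mul, hT, Matrix.mul_assoc, ← Matrix.mul_assoc (Rmat (T - k) Oᵀ),
      h1, Matrix.one_mul]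
  refine ⟨hXtX ▸ hU, ?_⟩
  rw [hXtX, hi, transpose_mul, hT, hinv]
  rw [Matrix.mul_sub, Matrix.mul_one, Matrix.sub_mul, h2]
  congr 1
  simp only [Matrix.mul_assoc]
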